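/- Let V, Y be real Hilbert spaces, ι : V → Y a bounded linear map, and a : V × V → ℝ a bounded coercive bilinear form with coercivity constant a_min > 0. Let V_f ⊆ V be a subspace satisfying the Poincaré-type inequality ‖ι v‖_Y ≤ C_P H ‖v‖_V for all v ∈ V_f, for some constants C_P, H > 0. Let ρ ∈ Y and let z ∈ V satisfy a(z,v) = ⟪ρ, ιv⟫_Y for all v ∈ V. Suppose z_I ∈ V satisfies z − z_I ∈ V_f and a(z_I, v) = 0 for all v ∈ V_f. Then ‖z − z_I‖_V ≤ (C_P H / a_min) ‖ρ‖_Y. -/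

import Mathlib

open scoped RealInnerProductSpace

/-- Optimal approximation property of the GRPS interpolant (Theorem 3.2, abstract
form): if the fine space `V_f` satisfies a Poincaré-type inequality with constant
`C_P H`, then the interpolant `z_I` of the weak solution `z` satisfies
`‖z - z_I‖ ≤ (C_P H / a_min) ‖ρ‖`. -/
theorem stmt12
    {V Y : Type*}
    [NormedAddCommGroup V] [InnerProductSpace ℝ V] [CompleteSpace V]
    [NormedAddCommGroup Y] [InnerProductSpace ℝ Y] [CompleteSpace Y]
    (ι : V →L[ℝ] Y)
    (a : V →ₗ[ℝ] V →ₗ[ℝ] ℝ)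
    (a_min a_max : ℝ)
    (ha_min : 0 < a_min) (hminmax : a_min ≤ a_max)
    (hbound : ∀ v w : V, |a v w| ≤ a_max * ‖v‖ * ‖w‖)
    (hcoer : ∀ v : V, a_min * ‖v‖ ^ 2 ≤ a v v)
    (V_f : Submodule ℝ V)
    (C_P H : ℝ) (hCP : 0 < C_P) (hH : 0 < H)
    (hPoincare : ∀ v ∈ V_f, ‖ι v‖ ≤ C_P * H * ‖v‖)
    (ρ : Y) (z z_I : V)
    (hz : ∀ v : V, a z v = ⟪ρ, ι v⟫)
    (hzI_mem : z - z_I ∈ V_f)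
    (hzI_orth : ∀ v ∈ V_f, a z_I v = 0) :
    ‖z - z_I‖ ≤ C_P * H / a_min * ‖ρ‖ := by
  set e := z - z_I with he
  have key : a_min * ‖e‖ ^ 2 ≤ ‖ρ‖ * (C_P * H * ‖e‖) := by
    have h1 : a e e = ⟪ρ, ι e⟫ := by
      have : a e e = a z e - a z_I e := by
        simp only [he, map_sub, LinearMap.sub_apply]; ring
      rw [this, hz e, hzI_orth e hzI_mem, sub_zero]
    calc a_min * ‖e‖ ^ 2 ≤ a e e := hcoer e
      _ = ⟪ρ, ι e⟫ := h1
      _ ≤ ‖ρ‖ * ‖ι e‖ := real_inner_le_norm ρ (ι e)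
      _ ≤ ‖ρ‖ * (C_P * H * ‖e‖) := by
          exact mul_le_mul_of_nonneg_left (hPoincare e hzI_mem) (norm_nonneg ρ)
  rcases eq_or_lt_of_le (norm_nonneg e) with h0 | h0
  · rw [← h0]
    positivity
  · rw [div_mul_eq_mul_div, le_div_iff₀ ha_min]
    have := key
    rw [pow_two] at this
    calc ‖e‖ * a_min = a_min * ‖e‖ := mul_comm _ _
      _ ≤ ‖ρ‖ * (C_P * H) := by
          have := (mul_le_mul_iff_left₀ h0).mp (by linarith [key] : a_min * ‖e‖ * ‖e‖ ≤ ‖ρ‖ * (C_P * H) * ‖e‖)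
          linarith
      _ = C_P * H * ‖ρ‖ := by ring
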